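/- Let A and B be nonempty finite types, let p : A → ℝ satisfy 0 < p i for every i, let ρ be the A-indexed complex diagonal matrix with diagonal entries p i, and let ω be a Hermitian complex matrix indexed by A × B. Define the matrix J indexed by A × B by J (i,k) (j,l) = (2/(p i + p j)) · ω (i,k) (j,l). Then (ρ ⊗ₖ 1) ★ J = ω, J is Hermitian, and J is the unique matrix with this property: every matrix J' indexed by A × B satisfying (ρ ⊗ₖ 1) ★ J' = ω equals J. -/

import Mathlib

open Matrix
open scoped Kronecker ComplexOrder

noncomputable def jordan {n : Type*} [Fintype n] (X Y : Matrix n n ℂ) : Matrix n n ℂ :=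
  (2 : ℂ)⁻¹ • (X * Y + Y * X)

noncomputable def trB {A B : Type*} [Fintype B] (M : Matrix (A × B) (A × B) ℂ) : Matrix A A ℂ :=
  Matrix.of fun i j => ∑ k, M (i, k) (j, k)

noncomputable def trA {A B : Type*} [Fintype A] (M : Matrix (A × B) (A × B) ℂ) : Matrix B B ℂ :=
  Matrix.of fun k l => ∑ i, M (i, k) (i, l)

def ptA {A B : Type*} (M : Matrix (A × B) (A × B) ℂ) : Matrix (A × B) (A × B) ℂ :=
  Matrix.of fun p q => M (q.1, p.2) (p.1, q.2)

def swap (A : Type*) [DecidableEq A] : Matrix (A × A) (A × A) ℂ :=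
  Matrix.of fun p q => if p.1 = q.2 ∧ p.2 = q.1 then 1 else 0

def IsState {A : Type*} [Fintype A] (ρ : Matrix A A ℂ) : Prop :=
  ρ.PosSemidef ∧ ρ.trace = 1

def IsJam {A B : Type*} [Fintype A] [Fintype B] [DecidableEq A]
    (J : Matrix (A × B) (A × B) ℂ) : Prop :=
  (ptA J).PosSemidef ∧ trB J = 1

noncomputable def cost {A B : Type*} [Fintype A] [Fintype B] [DecidableEq A] [DecidableEq B]
    (K : Matrix (A × B) (A × B) ℂ) (ρ : Matrix A A ℂ) (σ : Matrix B B ℂ) : ℝ :=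
  sInf { r : ℝ | ∃ J : Matrix (A × B) (A × B) ℂ, IsJam J ∧
      trA ((ρ ⊗ₖ (1 : Matrix B B ℂ)) * J) = σ ∧
      r = (Matrix.trace (K * jordan (ρ ⊗ₖ (1 : Matrix B B ℂ)) J)).re }

lemma jordan_diag_kron_apply {A B : Type*} [Fintype A] [Fintype B] [DecidableEq A] [DecidableEq B]
    (p : A → ℝ) (M : Matrix (A × B) (A × B) ℂ) (i : A) (k : B) (j : A) (l : B) :
    jordan ((Matrix.diagonal fun i => (p i : ℂ)) ⊗ₖ (1 : Matrix B B ℂ)) M (i, k) (j, l)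
      = (2 : ℂ)⁻¹ * ((p i : ℂ) + (p j : ℂ)) * M (i, k) (j, l) := by
  simp only [jordan, Matrix.smul_apply, Matrix.add_apply, mul_apply, Fintype.sum_prod_type,
    kroneckerMap_apply, diagonal_apply, one_apply, ite_mul, mul_ite, zero_mul, mul_zero,
    Finset.sum_ite_eq, Finset.sum_ite_eq', Finset.mem_univ, if_true, ite_zero_mul,
    Finset.sum_ite_irrel, Finset.sum_const_zero, one_mul, mul_one, smul_eq_mul]
  ring

theorem stmt0 {A B : Type*} [Fintype A] [Fintype B] [Nonempty A] [Nonempty B]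
    [DecidableEq A] [DecidableEq B]
    (p : A → ℝ) (hp : ∀ i, 0 < p i)
    (ω : Matrix (A × B) (A × B) ℂ) (hω : ω.IsHermitian)
    (J : Matrix (A × B) (A × B) ℂ)
    (hJ : ∀ i k j l, J (i, k) (j, l) = (2 / ((p i : ℂ) + (p j : ℂ))) * ω (i, k) (j, l)) :
    jordan ((Matrix.diagonal fun i => (p i : ℂ)) ⊗ₖ (1 : Matrix B B ℂ)) J = ω ∧
    J.IsHermitian ∧
    ∀ J' : Matrix (A × B) (A × B) ℂ,
      jordan ((Matrix.diagonal fun i => (p i : ℂ)) ⊗ₖ (1 : Matrix B B ℂ)) J' = ω → J' = J := by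
  have hne : ∀ i j : A, ((p i : ℂ) + (p j : ℂ)) ≠ 0 := by
    intro i j
    have : (0:ℝ) < p i + p j := add_pos (hp i) (hp j)
    simpa [← Complex.ofReal_add] using Complex.ofReal_ne_zero.mpr this.ne'
  refine ⟨?_, ?_, ?_⟩
  · ext ⟨i, k⟩ ⟨j, l⟩
    rw [jordan_diag_kron_apply, hJ]
    field_simp [hne i j]
  · ext ⟨i, k⟩ ⟨j, l⟩
    simp only [conjTranspose_apply, hJ]
    rw [star_mul', ← hω.apply (i, k) (j, l)]
    simp [Complex.star_def, map_div₀, Complex.conj_ofReal, add_comm]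
  · intro J' hJ'
    ext ⟨i, k⟩ ⟨j, l⟩
    have h := congrFun (congrFun hJ' (i, k)) (j, l)
    rw [jordan_diag_kron_apply] at h
    rw [hJ, ← h]
    field_simp [hne i j]
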